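/- arXiv:0904.1907 — 2 statements merged into one kernel-verified Lean document; each statement's English description precedes it below -/
import Mathlib

section
/- The image Φ_n = Ψ(Γ_n) of the Shannon cone under the averaging map equals exactly the set {(h_1,...,h_n) ∈ ℝ^n : h_{m-1} − 2h_m + h_{m+1} ≤ 0 for m = 1,...,n}, where h_0 = 0 and h_{n+1} = h_n. -/
open Finset Real

/-- Extend `h : Fin n → ℝ` (1-indexed as `h_1,…,h_n`) to `ℕ` with the
conventions `h_0 = 0` and `h_m = h_n` for `m > n`. -/
noncomputable def pad (n : ℕ) (h : Fin n → ℝ) : ℕ → ℝ := fun m =>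
  if m = 0 then 0
  else if hm : m - 1 < n then h ⟨m - 1, hm⟩
  else if hn : n - 1 < n then h ⟨n - 1, hn⟩ else 0

/-- The cone `Φ_n` of vectors whose padded sequence has nonpositive second differences. -/
def Phi (n : ℕ) : Set (Fin n → ℝ) :=
  {h | ∀ m, 1 ≤ m → m ≤ n → pad n h (m - 1) - 2 * pad n h m + pad n h (m + 1) ≤ 0}

/-- The second-order difference map `Θ`, with conventions `h_0 = 0`, `h_{n+1} = h_n`. -/
noncomputable def theta (n : ℕ) (h : Fin n → ℝ) : Fin n → ℝ :=
  fun i => pad n h i.val - 2 * pad n h (i.val + 1) + pad n h (i.val + 2)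

/-- The Shannon cone `Γ_n`: vectors indexed by subsets of `{1,…,n}` (with value
`0` at `∅`) satisfying nonnegativity, monotonicity and submodularity. -/
def Gamma (n : ℕ) : Set (Finset (Fin n) → ℝ) :=
  {H | H ∅ = 0 ∧ (∀ α, 0 ≤ H α) ∧ (∀ α β, α ⊆ β → H α ≤ H β) ∧
    ∀ α β, H (α ∪ β) + H (α ∩ β) ≤ H α + H β}

/-- The averaging map `Ψ`: `h_m = C(n,m)⁻¹ Σ_{|α|=m} H α` (1-indexed). -/
noncomputable def psi (n : ℕ) (H : Finset (Fin n) → ℝ) : Fin n → ℝ :=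
  fun i => ((n.choose (i.val + 1) : ℝ))⁻¹ *
    ∑ α ∈ powersetCard (i.val + 1) (univ : Finset (Fin n)), H α


lemma sumA {n : ℕ} (k : ℕ) (g : Finset (Fin n) → ℝ) :
    ∑ γ ∈ powersetCard (k+1) (univ : Finset (Fin n)), ∑ x ∈ γ, g (γ.erase x)
      = ((n - k : ℕ) : ℝ) * ∑ α ∈ powersetCard k (univ : Finset (Fin n)), g α := by
  have hR : ((n - k : ℕ) : ℝ) * ∑ α ∈ powersetCard k (univ : Finset (Fin n)), g α
      = ∑ α ∈ powersetCard k (univ : Finset (Fin n)), ∑ _x ∈ (univ \ α), g α := by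
    rw [Finset.mul_sum]
    refine Finset.sum_congr rfl fun α hα => ?_
    rw [Finset.sum_const, Finset.card_sdiff_of_subset (subset_univ α), card_univ,
      (Finset.mem_powersetCard.1 hα).2, Fintype.card_fin, nsmul_eq_mul]
  have L : ∑ γ ∈ powersetCard (k+1) (univ : Finset (Fin n)), ∑ x ∈ γ, g (γ.erase x)
      = ∑ p ∈ (powersetCard (k+1) (univ : Finset (Fin n))).sigma (fun γ => γ),
          g (p.1.erase p.2) :=
    Finset.sum_sigma' _ _ _
  have R : ∑ α ∈ powersetCard k (univ : Finset (Fin n)), ∑ _x ∈ (univ \ α), g α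
      = ∑ p ∈ (powersetCard k (univ : Finset (Fin n))).sigma (fun α => univ \ α),
          g p.1 :=
    Finset.sum_sigma' _ _ _
  rw [hR, L, R]
  refine Finset.sum_nbij' (fun p => ⟨p.1.erase p.2, p.2⟩) (fun p => ⟨insert p.2 p.1, p.2⟩)
    ?_ ?_ ?_ ?_ ?_
  · rintro ⟨γ, x⟩ hp
    simp only [Finset.mem_sigma, Finset.mem_powersetCard] at hp ⊢
    obtain ⟨⟨hsub, hcard⟩, hx⟩ := hp
    refine ⟨⟨(Finset.erase_subset _ _).trans hsub, ?_⟩, ?_⟩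
    · rw [Finset.card_erase_of_mem hx, hcard]; omega
    · simp [hx]
  · rintro ⟨α, x⟩ hp
    simp only [Finset.mem_sigma, Finset.mem_powersetCard, Finset.mem_sdiff] at hp ⊢
    obtain ⟨⟨hsub, hcard⟩, _, hx⟩ := hp
    refine ⟨⟨?_, ?_⟩, Finset.mem_insert_self _ _⟩
    · exact Finset.insert_subset (mem_univ _) hsub
    · rw [Finset.card_insert_of_notMem hx, hcard]
  · rintro ⟨γ, x⟩ hp
    simp only [Finset.mem_sigma] at hp
    simp [Finset.insert_erase hp.2]
  · rintro ⟨α, x⟩ hp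
    simp only [Finset.mem_sigma, Finset.mem_sdiff] at hp
    simp [Finset.erase_insert hp.2.2]
  · rintro ⟨γ, x⟩ _; rfl

lemma sum_erase_swap {n : ℕ} (s : Finset (Fin n)) (f : Fin n → Fin n → ℝ) :
    ∑ x ∈ s, ∑ y ∈ s.erase x, f x y = ∑ y ∈ s, ∑ x ∈ s.erase y, f x y := by
  have L : ∑ x ∈ s, ∑ y ∈ s.erase x, f x y
      = (∑ x ∈ s, ∑ y ∈ s, f x y) - ∑ x ∈ s, f x x := by
    rw [← Finset.sum_sub_distrib]
    exact Finset.sum_congr rfl fun x hx => Finset.sum_erase_eq_sub hx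
  have R : ∑ y ∈ s, ∑ x ∈ s.erase y, f x y
      = (∑ y ∈ s, ∑ x ∈ s, f x y) - ∑ y ∈ s, f y y := by
    rw [← Finset.sum_sub_distrib]
    exact Finset.sum_congr rfl fun y hy => Finset.sum_erase_eq_sub hy
  rw [L, R, Finset.sum_comm]

lemma key_ineq {n m : ℕ} (hm1 : 1 ≤ m) (hmn : m < n) {H : Finset (Fin n) → ℝ}
    (hsub : ∀ α β, H (α ∪ β) + H (α ∩ β) ≤ H α + H β) :
    ((m:ℝ)+1) * m * (∑ γ ∈ powersetCard (m+1) (univ : Finset (Fin n)), H γ)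
      + (((n-m:ℕ):ℝ)+1) * ((n-m : ℕ):ℝ) * (∑ δ ∈ powersetCard (m-1) (univ : Finset (Fin n)), H δ)
      ≤ 2 * m * ((n-m : ℕ):ℝ) * (∑ α ∈ powersetCard m (univ : Finset (Fin n)), H α) := by
  set T := powersetCard (m+1) (univ : Finset (Fin n)) with hT
  -- pointwise submodularity summed over triples
  have main : ∑ γ ∈ T, ∑ x ∈ γ, ∑ y ∈ γ.erase x, (H γ + H ((γ.erase x).erase y))
      ≤ ∑ γ ∈ T, ∑ x ∈ γ, ∑ y ∈ γ.erase x, (H (γ.erase x) + H (γ.erase y)) := by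
    refine Finset.sum_le_sum fun γ hγ => Finset.sum_le_sum fun x hx =>
      Finset.sum_le_sum fun y hy => ?_
    have hyγ : y ∈ γ := Finset.mem_of_mem_erase hy
    have hyx : y ≠ x := Finset.ne_of_mem_erase hy
    have hu : (γ.erase x) ∪ (γ.erase y) = γ := by
      ext a
      simp only [Finset.mem_union, Finset.mem_erase]
      constructor
      · rintro (⟨_, h⟩ | ⟨_, h⟩) <;> exact h
      · intro ha
        by_cases hax : a = x
        · exact Or.inr ⟨by simpa [hax] using hyx.symm, ha⟩
        · exact Or.inl ⟨hax, ha⟩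
    have hi : (γ.erase x) ∩ (γ.erase y) = (γ.erase x).erase y := by
      ext a
      simp only [Finset.mem_inter, Finset.mem_erase]
      tauto
    have := hsub (γ.erase x) (γ.erase y)
    rw [hu, hi] at this
    linarith
  -- compute the four sums
  have cardγ : ∀ γ ∈ T, γ.card = m + 1 := fun γ hγ => (Finset.mem_powersetCard.1 hγ).2
  have E1 : ∑ γ ∈ T, ∑ x ∈ γ, ∑ y ∈ γ.erase x, H γ
      = ((m:ℝ)+1) * m * ∑ γ ∈ T, H γ := by
    rw [Finset.mul_sum]
    refine Finset.sum_congr rfl fun γ hγ => ?_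
    have h1 : ∀ x ∈ γ, ∑ y ∈ γ.erase x, H γ = (m : ℝ) * H γ := fun x hx => by
      rw [Finset.sum_const, Finset.card_erase_of_mem hx, cardγ γ hγ, nsmul_eq_mul]
      norm_num
    rw [Finset.sum_congr rfl h1, Finset.sum_const, cardγ γ hγ, nsmul_eq_mul]
    push_cast; ring
  have E2 : ∑ γ ∈ T, ∑ x ∈ γ, ∑ y ∈ γ.erase x, H ((γ.erase x).erase y)
      = ((n-m:ℕ):ℝ) * (((n-(m-1):ℕ)):ℝ)
        * ∑ δ ∈ powersetCard (m-1) (univ : Finset (Fin n)), H δ := by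
    have step1 := sumA (n := n) m (fun α => ∑ y ∈ α, H (α.erase y))
    rw [hT, step1]
    obtain ⟨m', rfl⟩ : ∃ m', m = m' + 1 := ⟨m - 1, by omega⟩
    rw [sumA (n := n) m' H]
    simp only [Nat.add_sub_cancel]
    ring
  have E3 : ∑ γ ∈ T, ∑ x ∈ γ, ∑ y ∈ γ.erase x, H (γ.erase x)
      = (m:ℝ) * (((n-m:ℕ)):ℝ) * ∑ α ∈ powersetCard m (univ : Finset (Fin n)), H α := by
    have h1 : ∑ γ ∈ T, ∑ x ∈ γ, ∑ y ∈ γ.erase x, H (γ.erase x)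
        = ∑ γ ∈ T, ∑ x ∈ γ, (m:ℝ) * H (γ.erase x) := by
      refine Finset.sum_congr rfl fun γ hγ => Finset.sum_congr rfl fun x hx => ?_
      rw [Finset.sum_const, Finset.card_erase_of_mem hx, cardγ γ hγ, nsmul_eq_mul]
      norm_num
    rw [h1]
    simp only [← Finset.mul_sum]
    rw [sumA (n := n) m H]
    ring
  have E4 : ∑ γ ∈ T, ∑ x ∈ γ, ∑ y ∈ γ.erase x, H (γ.erase y)
      = (m:ℝ) * (((n-m:ℕ)):ℝ) * ∑ α ∈ powersetCard m (univ : Finset (Fin n)), H α := by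
    have h1 : ∑ γ ∈ T, ∑ x ∈ γ, ∑ y ∈ γ.erase x, H (γ.erase y)
        = ∑ γ ∈ T, ∑ x ∈ γ, (m:ℝ) * H (γ.erase x) := by
      refine Finset.sum_congr rfl fun γ hγ => ?_
      rw [sum_erase_swap γ (fun x y => H (γ.erase y))]
      refine Finset.sum_congr rfl fun y hy => ?_
      rw [Finset.sum_const, Finset.card_erase_of_mem hy, cardγ γ hγ, nsmul_eq_mul]
      norm_num
    rw [h1]
    simp only [← Finset.mul_sum]
    rw [sumA (n := n) m H]
    ring
  simp only [Finset.sum_add_distrib] at main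
  rw [E1, E2, E3, E4] at main
  have hcast : (((n-(m-1):ℕ)):ℝ) = ((n-m:ℕ):ℝ) + 1 := by
    have : n - (m-1) = (n - m) + 1 := by omega
    rw [this]; push_cast; ring
  rw [hcast] at main
  linarith

lemma pad_zero (n : ℕ) (h : Fin n → ℝ) : pad n h 0 = 0 := by simp [pad]

lemma pad_of_pos {n m : ℕ} (h : Fin n → ℝ) (hm1 : 1 ≤ m) (hm : m - 1 < n) :
    pad n h m = h ⟨m - 1, hm⟩ := by
  unfold pad
  rw [if_neg (by omega), dif_pos hm]

lemma pad_ge {n : ℕ} (h : Fin n → ℝ) {m : ℕ} (hm : n ≤ m) (hn : 1 ≤ n) :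
    pad n h m = pad n h n := by
  unfold pad
  split_ifs <;>
    first
      | rfl
      | omega
      | exact congrArg h (Fin.mk_eq_mk.mpr (by omega))

lemma pad_psi {n : ℕ} (H : Finset (Fin n) → ℝ) (h0 : H ∅ = 0) {m : ℕ} (hm : m ≤ n) :
    pad n (psi n H) m
      = ((n.choose m : ℕ):ℝ)⁻¹ * ∑ α ∈ powersetCard m (univ : Finset (Fin n)), H α := by
  rcases Nat.eq_zero_or_pos m with rfl | hm1
  · rw [pad_zero]
    simp [h0]
  · have hlt : m - 1 < n := by omega
    rw [pad_of_pos _ hm1 hlt]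
    show ((n.choose ((⟨m-1,hlt⟩ : Fin n).val + 1) : ℕ):ℝ)⁻¹ * _ = _
    have : (⟨m-1,hlt⟩ : Fin n).val + 1 = m := by simp; omega
    rw [this]

lemma psi_mem_Phi {n : ℕ} {H : Finset (Fin n) → ℝ} (hH : H ∈ _root_.Gamma n) : psi n H ∈ Phi n := by
  obtain ⟨h0, hpos, hmono, hsub⟩ := hH
  intro m hm1 hmn
  have hn1 : 1 ≤ n := le_trans hm1 hmn
  rcases eq_or_lt_of_le hmn with rfl | hlt
  · -- m = n case
    rw [pad_ge _ (Nat.le_succ m) hn1,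
        pad_psi H h0 (show m - 1 ≤ m by omega), pad_psi H h0 le_rfl]
    have hSn : ∑ α ∈ powersetCard m (univ : Finset (Fin m)), H α = H univ := by
      have hps : powersetCard m (univ : Finset (Fin m)) = {univ} := by
        simpa using Finset.powersetCard_self (univ : Finset (Fin m))
      rw [hps, Finset.sum_singleton]
    have hCm : (m.choose m : ℝ) = 1 := by rw [Nat.choose_self]; norm_num
    have hCpos : (0:ℝ) < (m.choose (m-1) : ℝ) := by
      exact_mod_cast Nat.choose_pos (by omega)
    have hbound : ∑ α ∈ powersetCard (m-1) (univ : Finset (Fin m)), H α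
        ≤ (m.choose (m-1) : ℝ) * H univ := by
      calc ∑ α ∈ powersetCard (m-1) (univ : Finset (Fin m)), H α
          ≤ ∑ _α ∈ powersetCard (m-1) (univ : Finset (Fin m)), H univ :=
            Finset.sum_le_sum fun α _ => hmono α univ (subset_univ α)
        _ = (m.choose (m-1) : ℝ) * H univ := by
            rw [Finset.sum_const, Finset.card_powersetCard, card_univ, Fintype.card_fin,
              nsmul_eq_mul]
    rw [hSn, hCm]
    have : ((m.choose (m-1) : ℕ):ℝ)⁻¹ * ∑ α ∈ powersetCard (m-1) (univ : Finset (Fin m)), H α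
        ≤ H univ := by
      rw [inv_mul_le_iff₀ hCpos]
      linarith [hbound]
    norm_num
    linarith
  · -- 1 ≤ m < n case
    rw [pad_psi H h0 (show m - 1 ≤ n by omega), pad_psi H h0 (le_of_lt hlt),
        pad_psi H h0 (show m + 1 ≤ n by omega)]
    set Slo := ∑ α ∈ powersetCard (m-1) (univ : Finset (Fin n)), H α
    set S := ∑ α ∈ powersetCard m (univ : Finset (Fin n)), H α
    set Shi := ∑ α ∈ powersetCard (m+1) (univ : Finset (Fin n)), H α
    have key := key_ineq hm1 hlt hsub
    set μ := (m:ℝ) with hμ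
    set ν := ((n-m:ℕ):ℝ) with hν
    have hμpos : (0:ℝ) < μ := by rw [hμ]; exact_mod_cast hm1
    have hνpos : (0:ℝ) < ν := by rw [hν]; exact_mod_cast (by omega : 0 < n - m)
    have hB : (0:ℝ) < (n.choose m : ℝ) := by exact_mod_cast Nat.choose_pos (le_of_lt hlt)
    set B := ((n.choose m : ℕ):ℝ) with hBdef
    -- choose identities
    have idD : ((n.choose (m+1) : ℕ):ℝ) * (μ + 1) = ν * B := by
      have := Nat.choose_succ_right_eq n m
      have h2 : (n.choose (m+1) : ℝ) * ((m:ℝ)+1) = (n.choose m : ℝ) * ((n-m:ℕ):ℝ) := by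
        exact_mod_cast congrArg (Nat.cast (R := ℝ)) this
      rw [hμ, hν, hBdef]; linarith [h2]
    have idA : B * μ = ((n.choose (m-1) : ℕ):ℝ) * (ν + 1) := by
      have h1 := Nat.choose_succ_right_eq n (m-1)
      have h2 : m - 1 + 1 = m := by omega
      have h3 : n - (m-1) = (n-m) + 1 := by omega
      rw [h2, h3] at h1
      have h4 : (n.choose m : ℝ) * (m:ℝ) = (n.choose (m-1) : ℝ) * (((n-m:ℕ):ℝ) + 1) := by
        exact_mod_cast congrArg (Nat.cast (R := ℝ)) h1
      rw [hμ, hν, hBdef]; linarith [h4]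
    have hApos : (0:ℝ) < ((n.choose (m-1) : ℕ):ℝ) := by
      exact_mod_cast Nat.choose_pos (by omega)
    have hDpos : (0:ℝ) < ((n.choose (m+1) : ℕ):ℝ) := by
      exact_mod_cast Nat.choose_pos (by omega)
    have hAinv : ((n.choose (m-1) : ℕ):ℝ)⁻¹ = (ν + 1) / (μ * B) := by
      rw [eq_div_iff (by positivity), inv_mul_eq_div, div_eq_iff (ne_of_gt hApos)]
      linarith [idA]
    have hDinv : ((n.choose (m+1) : ℕ):ℝ)⁻¹ = (μ + 1) / (ν * B) := by
      rw [eq_div_iff (by positivity), inv_mul_eq_div, div_eq_iff (ne_of_gt hDpos)]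
      linarith [idD]
    rw [hAinv, hDinv]
    have expand : (ν + 1) / (μ * B) * Slo - 2 * (B⁻¹ * S) + (μ + 1) / (ν * B) * Shi
        = ((μ+1) * μ * Shi + (ν+1) * ν * Slo - 2 * μ * ν * S) / (μ * ν * B) := by
      field_simp
      ring
    rw [expand]
    apply div_nonpos_of_nonpos_of_nonneg
    · linarith [key]
    · positivity

lemma pad_nzero {h : Fin 0 → ℝ} (m : ℕ) : pad 0 h m = 0 := by
  unfold pad
  split_ifs <;> first | rfl | omega

section reverse


variable {n : ℕ} {h : Fin n → ℝ}

lemma D_succ_le (hh : h ∈ Phi n) (m : ℕ) :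
    pad n h (m+2) - pad n h (m+1) ≤ pad n h (m+1) - pad n h m := by
  rcases Nat.eq_zero_or_pos n with rfl | hn
  · simp [pad_nzero]
  by_cases hc : m + 1 ≤ n
  · have := hh (m+1) (by omega) hc
    simp only [Nat.add_sub_cancel] at this
    linarith
  · have h1 : pad n h (m+2) = pad n h n := pad_ge h (by omega) hn
    have h2 : pad n h (m+1) = pad n h n := pad_ge h (by omega) hn
    have h3 : pad n h m = pad n h n := pad_ge h (by omega) hn
    rw [h1, h2, h3]

lemma D_antitone (hh : h ∈ Phi n) :
    Antitone (fun m => pad n h (m+1) - pad n h m) :=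
  antitone_nat_of_succ_le fun m => D_succ_le hh m

lemma D_nonneg (hh : h ∈ Phi n) (m : ℕ) : 0 ≤ pad n h (m+1) - pad n h m := by
  rcases Nat.eq_zero_or_pos n with rfl | hn
  · simp [pad_nzero]
  have hz : pad n h (m+n+1) - pad n h (m+n) = 0 := by
    rw [pad_ge h (m := m+n+1) (by omega) hn, pad_ge h (m := m+n) (by omega) hn]
    ring
  have h2 : pad n h (m+n+1) - pad n h (m+n) ≤ pad n h (m+1) - pad n h m :=
    D_antitone hh (show m ≤ m + n by omega)
  linarith

lemma pad_mono (hh : h ∈ Phi n) : Monotone (pad n h) :=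
  monotone_nat_of_le_succ fun m => by linarith [D_nonneg hh m]

lemma pad_shift (hh : h ∈ Phi n) (k : ℕ) {a v : ℕ} (hva : v ≤ a) :
    pad n h (a+k) - pad n h a ≤ pad n h (v+k) - pad n h v := by
  induction k with
  | zero => simp
  | succ k ih =>
    have hd : pad n h (a+k+1) - pad n h (a+k) ≤ pad n h (v+k+1) - pad n h (v+k) :=
      D_antitone hh (show v + k ≤ a + k by omega)
    have e1 : a + (k+1) = (a+k) + 1 := by omega
    have e2 : v + (k+1) = (v+k) + 1 := by omega
    rw [e1, e2]
    linarith

lemma exists_gamma (hh : h ∈ Phi n) : ∃ H ∈ _root_.Gamma n, psi n H = h := by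
  refine ⟨fun α => pad n h α.card, ⟨?_, ?_, ?_, ?_⟩, ?_⟩
  · simp [pad_zero]
  · intro α
    have := pad_mono hh (Nat.zero_le α.card)
    rwa [pad_zero] at this
  · intro α β hab
    exact pad_mono hh (Finset.card_le_card hab)
  · intro α β
    show pad n h (α ∪ β).card + pad n h (α ∩ β).card ≤ pad n h α.card + pad n h β.card
    have hc := Finset.card_union_add_card_inter α β
    have hva : (α ∩ β).card ≤ α.card := Finset.card_le_card Finset.inter_subset_left
    have hau : α.card ≤ (α ∪ β).card := Finset.card_le_card Finset.subset_union_left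
    set a := α.card
    set v := (α ∩ β).card
    set u := (α ∪ β).card
    set b := β.card
    have e1 : a + (u - a) = u := by omega
    have e2 : v + (u - a) = b := by omega
    have := pad_shift hh (u - a) hva
    rw [e1, e2] at this
    linarith
  · funext i
    show ((n.choose (i.val + 1) : ℝ))⁻¹ *
      ∑ α ∈ powersetCard (i.val + 1) (univ : Finset (Fin n)), pad n h α.card = h i
    have hcong : ∀ α ∈ powersetCard (i.val + 1) (univ : Finset (Fin n)),
        pad n h α.card = h i := by
      intro α hα
      rw [(Finset.mem_powersetCard.1 hα).2, pad_of_pos h (by omega) (by simp [i.isLt])]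
      refine congrArg h ?_
      ext
      simp
    rw [Finset.sum_congr rfl hcong, Finset.sum_const, Finset.card_powersetCard, card_univ,
      Fintype.card_fin, nsmul_eq_mul]
    have hC : ((n.choose (i.val + 1) : ℕ):ℝ) ≠ 0 := by
      have := Nat.choose_pos (show i.val + 1 ≤ n from i.isLt)
      positivity
    rw [← mul_assoc, inv_mul_cancel₀ hC, one_mul]


end reverse
/-- `Φ_n = Ψ(Γ_n)`: the image of the Shannon cone under averaging is exactly the
cone of second-difference inequalities. -/
theorem psi_image_Gamma (n : ℕ) : psi n '' Gamma n = Phi n := by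
  ext h
  constructor
  · rintro ⟨H, hH, rfl⟩
    exact psi_mem_Phi hH
  · intro hh
    obtain ⟨H, hH, hpsi⟩ := exists_gamma hh
    exact ⟨H, hH, hpsi⟩
end

section
/- The submodularity of joint entropy averaged over subsets: for any discrete random vector X and any 1 ≤ m ≤ n−1, the averages satisfy h_{m+1} − h_m ≤ h_m − h_{m-1}, where h_m is the average size-m joint entropy and h_0 = 0. -/
open Finset Real
set_option linter.unusedSectionVars false
set_option maxHeartbeats 1000000

/-- Joint Shannon entropy (natural log) of the coordinates in `α` of the random
vector `X` defined on a finite sample space `Ω` with probability mass `p`. -/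
noncomputable def jointEntropy {Ω E : Type*} [Fintype Ω] [Fintype E] [DecidableEq E] {n : ℕ}
    (p : Ω → ℝ) (X : Fin n → Ω → E) (α : Finset (Fin n)) : ℝ :=
  ∑ y : α → E, Real.negMulLog (∑ ω ∈ univ.filter (fun ω => ∀ i : α, X i ω = y i), p ω)

section
variable {Ω E : Type} [Fintype Ω] [Fintype E] [DecidableEq E] {n : ℕ}
  (p : Ω → ℝ) (X : Fin n → Ω → E)

noncomputable def Pm (α : Finset (Fin n)) (y : α → E) : ℝ :=
  ∑ ω ∈ univ.filter (fun ω => ∀ i : α, X i ω = y i), p ω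

lemma jointEntropy_eq (α : Finset (Fin n)) :
    jointEntropy p X α = ∑ y : α → E, Real.negMulLog (Pm p X α y) := rfl

def res {α γ : Finset (Fin n)} (h : α ⊆ γ) (z : γ → E) : α → E :=
  fun i => z ⟨i.1, h i.2⟩

lemma Pm_nonneg (hp0 : ∀ ω, 0 ≤ p ω) (α : Finset (Fin n)) (y : α → E) : 0 ≤ Pm p X α y :=
  Finset.sum_nonneg fun ω _ => hp0 ω

lemma Pm_mono (hp0 : ∀ ω, 0 ≤ p ω) {α γ : Finset (Fin n)} (h : α ⊆ γ) (z : γ → E) :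
    Pm p X γ z ≤ Pm p X α (res h z) := by
  apply Finset.sum_le_sum_of_subset_of_nonneg
  · intro ω hω
    simp only [mem_filter, mem_univ, true_and] at hω ⊢
    intro i
    exact hω ⟨i.1, h i.2⟩
  · intro ω _ _; exact hp0 ω

lemma Pm_marg {α γ : Finset (Fin n)} (h : α ⊆ γ) (y : α → E) :
    Pm p X α y = ∑ z : γ → E, if res h z = y then Pm p X γ z else 0 := by
  unfold Pm
  have : ∀ z : γ → E, (if res h z = y then ∑ ω ∈ univ.filter (fun ω => ∀ i : γ, X i ω = z i), p ω else 0)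
      = ∑ ω : Ω, if (∀ i : γ, X i ω = z i) then (if res h z = y then p ω else 0) else 0 := by
    intro z
    rw [Finset.sum_filter]
    split <;> simp
  rw [Finset.sum_congr rfl (fun z _ => this z), Finset.sum_comm, Finset.sum_filter]
  apply Finset.sum_congr rfl
  intro ω _
  have key : ∀ z : γ → E, (∀ i : γ, X i ω = z i) ↔ z = fun i : γ => X i.1 ω := by
    intro z
    constructor
    · intro hz; funext i; exact (hz i).symm
    · intro hz i; rw [hz]
  rw [Finset.sum_congr rfl (fun z _ => by rw [if_congr (key z) rfl rfl])]
  rw [Finset.sum_ite_eq' Finset.univ (fun i : γ => X i.1 ω) (fun z => if res h z = y then p ω else 0)]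
  simp only [mem_univ, if_true]
  have : (res h (fun i : γ => X i.1 ω) = y) ↔ (∀ i : α, X i.1 ω = y i) := by
    constructor
    · intro hz i; rw [← hz]; rfl
    · intro hz; funext i; exact hz i
  rw [if_congr this rfl rfl]

lemma Pm_total {γ : Finset (Fin n)} (hp1 : ∑ ω, p ω = 1) :
    ∑ z : γ → E, Pm p X γ z = 1 := by
  unfold Pm
  have : ∀ z : γ → E, ∑ ω ∈ univ.filter (fun ω => ∀ i : γ, X i ω = z i), p ω
      = ∑ ω : Ω, if (∀ i : γ, X i ω = z i) then p ω else 0 := fun z => Finset.sum_filter _ _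
  rw [Finset.sum_congr rfl (fun z _ => this z), Finset.sum_comm]
  rw [← hp1]
  apply Finset.sum_congr rfl
  intro ω _
  have key : ∀ z : γ → E, (∀ i : γ, X i ω = z i) ↔ z = fun i : γ => X i.1 ω := by
    intro z
    constructor
    · intro hz; funext i; exact (hz i).symm
    · intro hz i; rw [hz]
  rw [Finset.sum_congr rfl (fun z _ => by rw [if_congr (key z) rfl rfl])]
  rw [Finset.sum_ite_eq' Finset.univ (fun i : γ => X i.1 ω) (fun _ => p ω)]
  simp

lemma jointEntropy_rw {α γ : Finset (Fin n)} (h : α ⊆ γ) :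
    jointEntropy p X α = ∑ z : γ → E, Pm p X γ z * (-Real.log (Pm p X α (res h z))) := by
  rw [jointEntropy_eq]
  have : ∀ y : α → E, Real.negMulLog (Pm p X α y)
      = ∑ z : γ → E, if res h z = y then Pm p X γ z * (-Real.log (Pm p X α (res h z))) else 0 := by
    intro y
    rw [Real.negMulLog]
    nth_rewrite 1 [Pm_marg p X h y]
    rw [← Finset.sum_neg_distrib, Finset.sum_mul]
    apply Finset.sum_congr rfl
    intro z _
    split
    · rename_i hz
      rw [hz]; ring
    · simp
  rw [Finset.sum_congr rfl (fun y _ => this y), Finset.sum_comm]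
  apply Finset.sum_congr rfl
  intro z _
  rw [Finset.sum_ite_eq Finset.univ (res h z) (fun _ => Pm p X γ z * (-Real.log (Pm p X α (res h z))))]
  simp

lemma glue_le_one (hp0 : ∀ ω, 0 ≤ p ω) (hp1 : ∑ ω, p ω = 1) (α β : Finset (Fin n)) :
    ∑ z : ↑(α ∪ β) → E,
      Pm p X α (res subset_union_left z) * Pm p X β (res subset_union_right z)
        / Pm p X (α ∩ β) (res inter_subset_union z) ≤ 1 := by
  classical
  have hα : α ⊆ α ∪ β := subset_union_left
  have hβ : β ⊆ α ∪ β := subset_union_right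
  have hS : α ∩ β ⊆ α ∪ β := inter_subset_union
  set qS : Ω → ℝ := fun ω => Pm p X (α ∩ β) (fun i => X i.1 ω) with hqS
  have expand : ∀ z : ↑(α ∪ β) → E,
      Pm p X α (res hα z) * Pm p X β (res hβ z) / Pm p X (α ∩ β) (res hS z)
      = ∑ ω1 : Ω, ∑ ω2 : Ω,
          if (∀ i : α, X i.1 ω1 = res hα z i) ∧ (∀ i : β, X i.1 ω2 = res hβ z i) then
            p ω1 * p ω2 / Pm p X (α ∩ β) (res hS z) else 0 := by
    intro z
    set s := Pm p X (α ∩ β) (res hS z) with hs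
    rw [show Pm p X α (res hα z) = ∑ ω1 : Ω, if (∀ i : α, X i.1 ω1 = res hα z i) then p ω1 else 0 from Finset.sum_filter _ _,
        show Pm p X β (res hβ z) = ∑ ω2 : Ω, if (∀ i : β, X i.1 ω2 = res hβ z i) then p ω2 else 0 from Finset.sum_filter _ _,
        Finset.sum_mul_sum, Finset.sum_div]
    apply Finset.sum_congr rfl
    intro ω1 _
    rw [Finset.sum_div]
    apply Finset.sum_congr rfl
    intro ω2 _
    split_ifs with h1 h2 h3 <;> simp_all
  have inner : ∀ ω1 ω2 : Ω,
      (∑ z : ↑(α ∪ β) → E,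
        if (∀ i : α, X i.1 ω1 = res hα z i) ∧ (∀ i : β, X i.1 ω2 = res hβ z i) then
          p ω1 * p ω2 / Pm p X (α ∩ β) (res hS z) else 0)
      = if (∀ i : ↑(α ∩ β), X i.1 ω2 = X i.1 ω1) then p ω1 * p ω2 / qS ω1 else 0 := by
    intro ω1 ω2
    set z₀ : ↑(α ∪ β) → E := fun i => if h : i.1 ∈ α then X i.1 ω1 else X i.1 ω2 with hz₀
    have equiv : ∀ z : ↑(α ∪ β) → E,
        ((∀ i : α, X i.1 ω1 = res hα z i) ∧ (∀ i : β, X i.1 ω2 = res hβ z i))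
        ↔ ((∀ i : ↑(α ∩ β), X i.1 ω2 = X i.1 ω1) ∧ z = z₀) := by
      intro z
      constructor
      · rintro ⟨h1, h2⟩
        constructor
        · intro i
          have hiα : i.1 ∈ α := (Finset.mem_inter.mp i.2).1
          have hiβ : i.1 ∈ β := (Finset.mem_inter.mp i.2).2
          have e1 := h1 ⟨i.1, hiα⟩
          have e2 := h2 ⟨i.1, hiβ⟩
          simp only [res] at e1 e2
          rw [e1, e2]
        · funext j
          by_cases hj : j.1 ∈ α
          · have e1 := h1 ⟨j.1, hj⟩
            simp only [res] at e1
            have hjj : (⟨j.1, hα hj⟩ : ↑(α ∪ β)) = j := Subtype.ext rfl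
            rw [hjj] at e1
            simp only [hz₀, dif_pos hj, ← e1]
          · have hjβ : j.1 ∈ β := by
              rcases Finset.mem_union.mp j.2 with h | h
              · exact absurd h hj
              · exact h
            have e2 := h2 ⟨j.1, hjβ⟩
            simp only [res] at e2
            have hjj : (⟨j.1, hβ hjβ⟩ : ↑(α ∪ β)) = j := Subtype.ext rfl
            rw [hjj] at e2
            simp only [hz₀, dif_neg hj, ← e2]
      · rintro ⟨hc, rfl⟩
        constructor
        · intro i
          simp only [res, hz₀, dif_pos i.2]
        · intro i
          by_cases hi : i.1 ∈ α
          · have := hc ⟨i.1, Finset.mem_inter.mpr ⟨hi, i.2⟩⟩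
            simp only [res, hz₀, dif_pos hi]
            exact this
          · simp only [res, hz₀, dif_neg hi]
    rw [Finset.sum_congr rfl (fun z _ => by rw [if_congr (equiv z) rfl rfl])]
    by_cases hC : ∀ i : ↑(α ∩ β), X i.1 ω2 = X i.1 ω1
    · simp only [eq_true hC, true_and, if_true]
      rw [Finset.sum_ite_eq' Finset.univ z₀
        (fun z => p ω1 * p ω2 / Pm p X (α ∩ β) (res hS z))]
      simp only [Finset.mem_univ, if_true]
      have : res hS z₀ = fun i : ↑(α ∩ β) => X i.1 ω1 := by
        funext i
        simp only [res, hz₀, dif_pos (Finset.mem_inter.mp i.2).1]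
      rw [this]
    · simp only [eq_false hC, false_and, if_false, Finset.sum_const_zero]
  have stepD : ∀ ω1 : Ω,
      (∑ ω2 : Ω, if (∀ i : ↑(α ∩ β), X i.1 ω2 = X i.1 ω1) then p ω1 * p ω2 / qS ω1 else 0)
      = p ω1 / qS ω1 * qS ω1 := by
    intro ω1
    have : qS ω1 = ∑ ω2 : Ω, if (∀ i : ↑(α ∩ β), X i.1 ω2 = X i.1 ω1) then p ω2 else 0 := by
      simp only [hqS]
      exact Finset.sum_filter _ _
    rw [this, Finset.mul_sum]
    apply Finset.sum_congr rfl
    intro ω2 _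
    split_ifs
    · ring
    · ring
  calc ∑ z : ↑(α ∪ β) → E,
      Pm p X α (res subset_union_left z) * Pm p X β (res subset_union_right z)
        / Pm p X (α ∩ β) (res inter_subset_union z)
      = ∑ ω1 : Ω, ∑ ω2 : Ω, ∑ z : ↑(α ∪ β) → E,
          if (∀ i : α, X i.1 ω1 = res hα z i) ∧ (∀ i : β, X i.1 ω2 = res hβ z i) then
            p ω1 * p ω2 / Pm p X (α ∩ β) (res hS z) else 0 := by
        rw [Finset.sum_congr rfl (fun z _ => expand z), Finset.sum_comm]
        exact Finset.sum_congr rfl (fun ω1 _ => Finset.sum_comm)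
    _ = ∑ ω1 : Ω, ∑ ω2 : Ω,
          if (∀ i : ↑(α ∩ β), X i.1 ω2 = X i.1 ω1) then p ω1 * p ω2 / qS ω1 else 0 :=
        Finset.sum_congr rfl (fun ω1 _ => Finset.sum_congr rfl (fun ω2 _ => inner ω1 ω2))
    _ = ∑ ω1 : Ω, p ω1 / qS ω1 * qS ω1 :=
        Finset.sum_congr rfl (fun ω1 _ => stepD ω1)
    _ ≤ ∑ ω1 : Ω, p ω1 := by
        apply Finset.sum_le_sum
        intro ω1 _
        by_cases hq : qS ω1 = 0
        · rw [hq, mul_zero]; exact hp0 ω1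
        · rw [div_mul_cancel₀ _ hq]
    _ = 1 := hp1

lemma entropy_key {f a b s : ℝ} (hfa : f ≤ a) (hfb : f ≤ b) (hfs : f ≤ s)
    (hf0 : 0 ≤ f) :
    f - a * b / s ≤ f * (-Real.log a) + f * (-Real.log b)
      - (f * (-Real.log f) + f * (-Real.log s)) := by
  rcases eq_or_lt_of_le hf0 with hfz | hfz
  · rw [← hfz]
    have ha0 : (0:ℝ) ≤ a := le_trans hf0 hfa
    have hb0 : (0:ℝ) ≤ b := le_trans hf0 hfb
    have hs0 : (0:ℝ) ≤ s := le_trans hf0 hfs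
    have : 0 ≤ a * b / s := by positivity
    simp only [zero_sub, zero_mul, add_zero, sub_zero, zero_add]
    linarith
  · have haz : 0 < a := lt_of_lt_of_le hfz hfa
    have hbz : 0 < b := lt_of_lt_of_le hfz hfb
    have hsz : 0 < s := lt_of_lt_of_le hfz hfs
    have hpos : 0 < a * b / (f * s) := by positivity
    have hlog := Real.log_le_sub_one_of_pos hpos
    rw [Real.log_div (by positivity) (by positivity), Real.log_mul haz.ne' hbz.ne',
      Real.log_mul hfz.ne' hsz.ne'] at hlog
    have e1 : f * (a * b / (f * s)) = a * b / s := by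
      field_simp
    have h2 := mul_le_mul_of_nonneg_left hlog hfz.le
    have h3 : f * (a * b / (f * s) - 1) = a * b / s - f := by
      rw [mul_sub, e1, mul_one]
    rw [h3] at h2
    have goal_eq : f * (-Real.log a) + f * (-Real.log b)
        - (f * (-Real.log f) + f * (-Real.log s))
        = f * (Real.log f + Real.log s) - f * (Real.log a + Real.log b) := by
      ring
    rw [goal_eq]
    linarith

lemma submod (hp0 : ∀ ω, 0 ≤ p ω) (hp1 : ∑ ω, p ω = 1) (α β : Finset (Fin n)) :
    jointEntropy p X (α ∪ β) + jointEntropy p X (α ∩ β)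
      ≤ jointEntropy p X α + jointEntropy p X β := by
  classical
  have key : ∀ z : ↑(α ∪ β) → E,
      Pm p X (α ∪ β) z
        - Pm p X α (res subset_union_left z) * Pm p X β (res subset_union_right z)
            / Pm p X (α ∩ β) (res inter_subset_union z)
      ≤ Pm p X (α ∪ β) z * (-Real.log (Pm p X α (res subset_union_left z)))
        + Pm p X (α ∪ β) z * (-Real.log (Pm p X β (res subset_union_right z)))
        - (Pm p X (α ∪ β) z * (-Real.log (Pm p X (α ∪ β) z))
          + Pm p X (α ∪ β) z * (-Real.log (Pm p X (α ∩ β) (res inter_subset_union z)))) :=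
    fun z => entropy_key (Pm_mono p X hp0 subset_union_left z)
      (Pm_mono p X hp0 subset_union_right z) (Pm_mono p X hp0 inter_subset_union z)
      (Pm_nonneg p X hp0 _ _)
  have hsum := Finset.sum_le_sum
    (fun z (_ : z ∈ (Finset.univ : Finset (↑(α ∪ β) → E))) => key z)
  rw [Finset.sum_sub_distrib, Pm_total p X hp1] at hsum
  have hglue := glue_le_one p X hp0 hp1 α β
  rw [Finset.sum_sub_distrib, Finset.sum_add_distrib, Finset.sum_add_distrib] at hsum
  have e1 := jointEntropy_rw p X (subset_union_left : α ⊆ α ∪ β)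
  have e2 := jointEntropy_rw p X (subset_union_right : β ⊆ α ∪ β)
  have e3 := jointEntropy_rw p X (inter_subset_union : α ∩ β ⊆ α ∪ β)
  have e4 := jointEntropy_rw p X (subset_rfl : α ∪ β ⊆ α ∪ β)
  have hres : ∀ z : ↑(α ∪ β) → E, res (subset_rfl : α ∪ β ⊆ α ∪ β) z = z := fun z => rfl
  simp only [hres] at e4
  rw [e1, e2, e3, e4]
  linarith
lemma step_lemma (g : Finset (Fin n) → ℝ) (k : ℕ) :
    ∑ A ∈ powersetCard k (univ : Finset (Fin n)), ∑ i ∈ univ \ A, g (insert i A)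
    = ((k : ℝ) + 1) * ∑ α ∈ powersetCard (k + 1) (univ : Finset (Fin n)), g α := by
  classical
  calc ∑ A ∈ powersetCard k (univ : Finset (Fin n)), ∑ i ∈ univ \ A, g (insert i A)
      = ∑ x ∈ (powersetCard k (univ : Finset (Fin n))).sigma (fun A => univ \ A),
          g (insert x.2 x.1) := Finset.sum_sigma' _ _ _
    _ = ∑ x ∈ (powersetCard (k + 1) (univ : Finset (Fin n))).sigma (fun α => α), g x.1 := by
        apply Finset.sum_nbij' (i := fun x => ⟨insert x.2 x.1, x.2⟩)
          (j := fun x => ⟨x.1.erase x.2, x.2⟩)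
        · rintro ⟨A, i⟩ hx
          rw [Finset.mem_sigma] at hx ⊢
          obtain ⟨hA, hi⟩ := hx
          rw [Finset.mem_powersetCard_univ] at hA ⊢
          have hiA : i ∉ A := (Finset.mem_sdiff.mp hi).2
          exact ⟨by rw [Finset.card_insert_of_notMem hiA, hA], Finset.mem_insert_self _ _⟩
        · rintro ⟨α, i⟩ hx
          rw [Finset.mem_sigma] at hx ⊢
          obtain ⟨hα, hi⟩ := hx
          rw [Finset.mem_powersetCard_univ] at hα ⊢
          refine ⟨by rw [Finset.card_erase_of_mem hi, hα]; omega, ?_⟩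
          exact Finset.mem_sdiff.mpr ⟨Finset.mem_univ _, Finset.notMem_erase _ _⟩
        · rintro ⟨A, i⟩ hx
          rw [Finset.mem_sigma] at hx
          have hiA : i ∉ A := (Finset.mem_sdiff.mp hx.2).2
          exact Sigma.ext (by simp [Finset.erase_insert hiA]) (heq_of_eq rfl)
        · rintro ⟨α, i⟩ hx
          rw [Finset.mem_sigma] at hx
          exact Sigma.ext (by simp [Finset.insert_erase hx.2]) (heq_of_eq rfl)
        · rintro ⟨A, i⟩ _
          rfl
    _ = ∑ α ∈ powersetCard (k + 1) (univ : Finset (Fin n)), ∑ _i ∈ α, g α :=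
        (Finset.sum_sigma' (powersetCard (k + 1) (univ : Finset (Fin n))) (fun α => α)
          (fun α _ => g α)).symm
    _ = ((k : ℝ) + 1) * ∑ α ∈ powersetCard (k + 1) (univ : Finset (Fin n)), g α := by
        rw [Finset.mul_sum]
        apply Finset.sum_congr rfl
        intro α hα
        rw [Finset.sum_const, Finset.mem_powersetCard_univ.mp hα, nsmul_eq_mul]
        push_cast
        ring

lemma jointEntropy_empty (hp1 : ∑ ω, p ω = 1) :
    jointEntropy p X (∅ : Finset (Fin n)) = 0 := by
  rw [jointEntropy_eq]
  apply Finset.sum_eq_zero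
  intro y _
  have : Pm p X ∅ y = 1 := by
    unfold Pm
    rw [Finset.filter_true_of_mem fun ω _ => fun i => absurd i.2 (Finset.notMem_empty _)]
    exact hp1
  rw [this]
  simp [Real.negMulLog]
lemma final_arith (M K C1 C2 C3 S1 S2 S3 x1 x2 x3 : ℝ)
    (hM : 0 < M) (hK : 0 < K) (hC1 : 0 < C1) (hC2 : 0 < C2) (hC3 : 0 < C3)
    (e1 : C3 * (M + 1) = C2 * K) (e2 : C2 * M = C1 * (K + 1))
    (hx1 : x1 = C1⁻¹ * S1) (hx2 : x2 = C2⁻¹ * S2) (hx3 : x3 = C3⁻¹ * S3)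
    (master : M * ((M + 1) * S3) + (K + 1) * (K * S1) ≤ K * (M * S2) + K * (M * S2)) :
    x3 - x2 ≤ x2 - x1 := by
  have hS1 : S1 = C1 * x1 := by rw [hx1, ← mul_assoc, mul_inv_cancel₀ hC1.ne', one_mul]
  have hS2 : S2 = C2 * x2 := by rw [hx2, ← mul_assoc, mul_inv_cancel₀ hC2.ne', one_mul]
  have hS3 : S3 = C3 * x3 := by rw [hx3, ← mul_assoc, mul_inv_cancel₀ hC3.ne', one_mul]
  rw [hS1, hS2, hS3] at master
  have E3 : M * ((M + 1) * (C3 * x3)) = (M * K * C2) * x3 := by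
    linear_combination (M * x3) * e1
  have E1 : (K + 1) * (K * (C1 * x1)) = (M * K * C2) * x1 := by
    linear_combination (-(K * x1)) * e2
  rw [E3, E1] at master
  have hD : 0 < M * K * C2 := by positivity
  have master2 : (M * K * C2) * (x3 + x1) ≤ (M * K * C2) * (2 * x2) := by
    rw [mul_add]; linarith
  have := (mul_le_mul_iff_right₀ hD).mp master2
  linarith

end

/-- Averaged submodularity of joint entropy: for any discrete random vector and
`1 ≤ m ≤ n - 1`, the increments of the average entropy function are
nonincreasing: `h_{m+1} - h_m ≤ h_m - h_{m-1}` (with `h_0 = 0`). -/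
theorem average_entropy_increments_nonincreasing (n : ℕ) (Ω E : Type)
    [Fintype Ω] [Fintype E] [DecidableEq E]
    (p : Ω → ℝ) (hp0 : ∀ ω, 0 ≤ p ω) (hp1 : ∑ ω, p ω = 1)
    (X : Fin n → Ω → E) (h : ℕ → ℝ)
    (hdef : ∀ m, 1 ≤ m → m ≤ n → h m = ((n.choose m : ℝ))⁻¹ *
      ∑ α ∈ powersetCard m (univ : Finset (Fin n)), jointEntropy p X α)
    (h0 : h 0 = 0) :
    ∀ m, 1 ≤ m → m ≤ n - 1 → h (m + 1) - h m ≤ h m - h (m - 1) := by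
  intro m hm1 hmn
  have hm1n : m + 1 ≤ n := by omega
  have hm'' : m - 1 + 1 = m := by omega
  classical
  -- cardinality facts
  have hA_card : ∀ A ∈ powersetCard (m - 1) (univ : Finset (Fin n)), A.card = m - 1 :=
    fun A hA => Finset.mem_powersetCard_univ.mp hA
  have hU_card : ∀ A ∈ powersetCard (m - 1) (univ : Finset (Fin n)),
      (univ \ A).card = n - m + 1 := by
    intro A hA
    rw [Finset.card_sdiff_of_subset (Finset.subset_univ _), Finset.card_univ, Fintype.card_fin, hA_card A hA]
    omega
  have hIns_card : ∀ A ∈ powersetCard (m - 1) (univ : Finset (Fin n)), ∀ i ∈ univ \ A,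
      (univ \ insert i A).card = n - m := by
    intro A hA i hi
    rw [Finset.card_sdiff_of_subset (Finset.subset_univ _), Finset.card_univ, Fintype.card_fin,
      Finset.card_insert_of_notMem (Finset.mem_sdiff.mp hi).2, hA_card A hA]
    omega
  have hcastm : ((m - 1 : ℕ) : ℝ) + 1 = (m : ℝ) := by
    rw [Nat.cast_sub hm1]; push_cast; ring
  have hcastK : ((n - m + 1 : ℕ) : ℝ) = ((n - m : ℕ) : ℝ) + 1 := by push_cast; ring
  -- master inequality from submodularity
  have master0 :
      (∑ A ∈ powersetCard (m - 1) (univ : Finset (Fin n)), ∑ i ∈ univ \ A,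
        ∑ j ∈ univ \ insert i A,
          (jointEntropy p X (insert j (insert i A)) + jointEntropy p X A))
      ≤ ∑ A ∈ powersetCard (m - 1) (univ : Finset (Fin n)), ∑ i ∈ univ \ A,
        ∑ j ∈ univ \ insert i A,
          (jointEntropy p X (insert i A) + jointEntropy p X (insert j A)) := by
    apply Finset.sum_le_sum; intro A _
    apply Finset.sum_le_sum; intro i hi
    apply Finset.sum_le_sum; intro j hj
    have hiA : i ∉ A := (Finset.mem_sdiff.mp hi).2
    have hjIA : j ∉ insert i A := (Finset.mem_sdiff.mp hj).2
    have hji : j ≠ i := fun hh => hjIA (hh ▸ Finset.mem_insert_self i A)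
    have hjA : j ∉ A := fun hh => hjIA (Finset.mem_insert_of_mem hh)
    have hU : insert i A ∪ insert j A = insert j (insert i A) := by
      ext x
      simp only [Finset.mem_union, Finset.mem_insert]
      tauto
    have hI : insert i A ∩ insert j A = A := by
      ext x
      simp only [Finset.mem_inter, Finset.mem_insert]
      constructor
      · rintro ⟨h1 | h1, h2 | h2⟩
        · exact absurd ((h1.symm.trans h2).symm) hji
        · exact h2
        · exact h1
        · exact h1
      · intro hx
        exact ⟨Or.inr hx, Or.inr hx⟩
    have hsub := submod p X hp0 hp1 (insert i A) (insert j A)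
    rw [hU, hI] at hsub
    linarith
  simp only [Finset.sum_add_distrib] at master0
  -- evaluate the four triple sums
  have hT1 : (∑ A ∈ powersetCard (m - 1) (univ : Finset (Fin n)), ∑ i ∈ univ \ A,
        ∑ j ∈ univ \ insert i A, jointEntropy p X (insert i A))
      = ((n - m : ℕ) : ℝ) * ((m : ℝ) *
          ∑ α ∈ powersetCard m (univ : Finset (Fin n)), jointEntropy p X α) := by
    calc (∑ A ∈ powersetCard (m - 1) (univ : Finset (Fin n)), ∑ i ∈ univ \ A,
          ∑ j ∈ univ \ insert i A, jointEntropy p X (insert i A))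
        = ∑ A ∈ powersetCard (m - 1) (univ : Finset (Fin n)), ∑ i ∈ univ \ A,
            ((n - m : ℕ) : ℝ) * jointEntropy p X (insert i A) := by
          apply Finset.sum_congr rfl; intro A hA
          apply Finset.sum_congr rfl; intro i hi
          rw [Finset.sum_const, hIns_card A hA i hi, nsmul_eq_mul]
      _ = ((n - m : ℕ) : ℝ) * ∑ A ∈ powersetCard (m - 1) (univ : Finset (Fin n)),
            ∑ i ∈ univ \ A, jointEntropy p X (insert i A) := by
          rw [Finset.mul_sum]
          exact Finset.sum_congr rfl fun A _ => (Finset.mul_sum _ _ _).symm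
      _ = ((n - m : ℕ) : ℝ) * ((m : ℝ) *
            ∑ α ∈ powersetCard m (univ : Finset (Fin n)), jointEntropy p X α) := by
          rw [step_lemma (fun α => jointEntropy p X α) (m - 1), hm'', hcastm]
  have hT2 : (∑ A ∈ powersetCard (m - 1) (univ : Finset (Fin n)), ∑ i ∈ univ \ A,
        ∑ j ∈ univ \ insert i A, jointEntropy p X (insert j A))
      = ((n - m : ℕ) : ℝ) * ((m : ℝ) *
          ∑ α ∈ powersetCard m (univ : Finset (Fin n)), jointEntropy p X α) := by
    calc (∑ A ∈ powersetCard (m - 1) (univ : Finset (Fin n)), ∑ i ∈ univ \ A,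
          ∑ j ∈ univ \ insert i A, jointEntropy p X (insert j A))
        = ∑ A ∈ powersetCard (m - 1) (univ : Finset (Fin n)), ∑ i ∈ univ \ A,
            ∑ j ∈ (univ \ A).erase i, jointEntropy p X (insert j A) := by
          apply Finset.sum_congr rfl; intro A _
          apply Finset.sum_congr rfl; intro i _
          apply Finset.sum_congr _ fun _ _ => rfl
          ext x
          simp only [Finset.mem_sdiff, Finset.mem_erase, Finset.mem_insert, Finset.mem_univ,
            true_and]
          tauto
      _ = ∑ A ∈ powersetCard (m - 1) (univ : Finset (Fin n)), ∑ j ∈ univ \ A,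
            ∑ i ∈ (univ \ A).erase j, jointEntropy p X (insert j A) := by
          apply Finset.sum_congr rfl; intro A _
          apply Finset.sum_comm'
          intro x y
          constructor
          · rintro ⟨h1, h2⟩
            rw [Finset.mem_erase] at h2
            exact ⟨Finset.mem_erase.mpr ⟨fun hh => h2.1 hh.symm, h1⟩, h2.2⟩
          · rintro ⟨h1, h2⟩
            rw [Finset.mem_erase] at h1
            exact ⟨h1.2, Finset.mem_erase.mpr ⟨fun hh => h1.1 hh.symm, h2⟩⟩
      _ = ∑ A ∈ powersetCard (m - 1) (univ : Finset (Fin n)), ∑ j ∈ univ \ A,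
            ((n - m : ℕ) : ℝ) * jointEntropy p X (insert j A) := by
          apply Finset.sum_congr rfl; intro A hA
          apply Finset.sum_congr rfl; intro j hj
          rw [Finset.sum_const, Finset.card_erase_of_mem hj, hU_card A hA, nsmul_eq_mul]
          norm_num
      _ = ((n - m : ℕ) : ℝ) * ∑ A ∈ powersetCard (m - 1) (univ : Finset (Fin n)),
            ∑ j ∈ univ \ A, jointEntropy p X (insert j A) := by
          rw [Finset.mul_sum]
          exact Finset.sum_congr rfl fun A _ => (Finset.mul_sum _ _ _).symm
      _ = ((n - m : ℕ) : ℝ) * ((m : ℝ) *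
            ∑ α ∈ powersetCard m (univ : Finset (Fin n)), jointEntropy p X α) := by
          rw [step_lemma (fun α => jointEntropy p X α) (m - 1), hm'', hcastm]
  have hT3 : (∑ A ∈ powersetCard (m - 1) (univ : Finset (Fin n)), ∑ i ∈ univ \ A,
        ∑ j ∈ univ \ insert i A, jointEntropy p X (insert j (insert i A)))
      = (m : ℝ) * (((m : ℝ) + 1) *
          ∑ α ∈ powersetCard (m + 1) (univ : Finset (Fin n)), jointEntropy p X α) := by
    have s1 := step_lemma (n := n)
      (fun α => ∑ j ∈ univ \ α, jointEntropy p X (insert j α)) (m - 1)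
    rw [hm'', hcastm] at s1
    have s2 := step_lemma (n := n) (fun α => jointEntropy p X α) m
    calc (∑ A ∈ powersetCard (m - 1) (univ : Finset (Fin n)), ∑ i ∈ univ \ A,
          ∑ j ∈ univ \ insert i A, jointEntropy p X (insert j (insert i A)))
        = (m : ℝ) * ∑ α ∈ powersetCard m (univ : Finset (Fin n)),
            ∑ j ∈ univ \ α, jointEntropy p X (insert j α) := s1
      _ = (m : ℝ) * (((m : ℝ) + 1) *
            ∑ α ∈ powersetCard (m + 1) (univ : Finset (Fin n)), jointEntropy p X α) := by
          rw [s2]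
  have hT4 : (∑ A ∈ powersetCard (m - 1) (univ : Finset (Fin n)), ∑ i ∈ univ \ A,
        ∑ j ∈ univ \ insert i A, jointEntropy p X A)
      = (((n - m : ℕ) : ℝ) + 1) * (((n - m : ℕ) : ℝ) *
          ∑ α ∈ powersetCard (m - 1) (univ : Finset (Fin n)), jointEntropy p X α) := by
    calc (∑ A ∈ powersetCard (m - 1) (univ : Finset (Fin n)), ∑ i ∈ univ \ A,
          ∑ j ∈ univ \ insert i A, jointEntropy p X A)
        = ∑ A ∈ powersetCard (m - 1) (univ : Finset (Fin n)),
            (((n - m : ℕ) : ℝ) + 1) * (((n - m : ℕ) : ℝ) * jointEntropy p X A) := by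
          apply Finset.sum_congr rfl; intro A hA
          have e1 : ∀ i ∈ univ \ A, (∑ _j ∈ univ \ insert i A, jointEntropy p X A)
              = ((n - m : ℕ) : ℝ) * jointEntropy p X A := by
            intro i hi
            rw [Finset.sum_const, hIns_card A hA i hi, nsmul_eq_mul]
          rw [Finset.sum_congr rfl e1, Finset.sum_const, hU_card A hA, nsmul_eq_mul, hcastK]
      _ = (((n - m : ℕ) : ℝ) + 1) * (((n - m : ℕ) : ℝ) *
            ∑ α ∈ powersetCard (m - 1) (univ : Finset (Fin n)), jointEntropy p X α) := by
          rw [Finset.mul_sum, Finset.mul_sum]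
  rw [hT1, hT2, hT3, hT4] at master0
  -- choose identities
  have hc1 : 0 < n.choose (m - 1) := Nat.choose_pos (by omega)
  have hc2 : 0 < n.choose m := Nat.choose_pos (by omega)
  have hc3 : 0 < n.choose (m + 1) := Nat.choose_pos hm1n
  have hKpos : (0 : ℝ) < ((n - m : ℕ) : ℝ) := by
    have : 1 ≤ n - m := by omega
    exact_mod_cast Nat.lt_of_lt_of_le Nat.zero_lt_one this
  have hMpos : (0 : ℝ) < (m : ℝ) := by exact_mod_cast hm1
  have e1 : ((n.choose (m + 1) : ℝ)) * ((m : ℝ) + 1) = (n.choose m : ℝ) * ((n - m : ℕ) : ℝ) := by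
    have hh := Nat.choose_succ_right_eq n m
    exact_mod_cast hh
  have e2 : ((n.choose m : ℝ)) * (m : ℝ) = (n.choose (m - 1) : ℝ) * (((n - m : ℕ) : ℝ) + 1) := by
    have hh := Nat.choose_succ_right_eq n (m - 1)
    rw [hm''] at hh
    have hnm : n - (m - 1) = n - m + 1 := by omega
    rw [hnm] at hh
    rw [← hcastK]
    exact_mod_cast hh
  -- entropy of the empty set
  have hS0 : h (m - 1) = ((n.choose (m - 1) : ℝ))⁻¹ *
      ∑ α ∈ powersetCard (m - 1) (univ : Finset (Fin n)), jointEntropy p X α := by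
    by_cases hm2 : m = 1
    · have hm0 : m - 1 = 0 := by omega
      rw [hm0, h0, Finset.powersetCard_zero, Finset.sum_singleton,
        jointEntropy_empty p X hp1, mul_zero]
    · exact hdef (m - 1) (by omega) (by omega)
  exact final_arith (m : ℝ) ((n - m : ℕ) : ℝ)
    (n.choose (m - 1) : ℝ) (n.choose m : ℝ) (n.choose (m + 1) : ℝ)
    (∑ α ∈ powersetCard (m - 1) (univ : Finset (Fin n)), jointEntropy p X α)
    (∑ α ∈ powersetCard m (univ : Finset (Fin n)), jointEntropy p X α)
    (∑ α ∈ powersetCard (m + 1) (univ : Finset (Fin n)), jointEntropy p X α)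
    (h (m - 1)) (h m) (h (m + 1))
    hMpos hKpos (by exact_mod_cast hc1) (by exact_mod_cast hc2) (by exact_mod_cast hc3)
    e1 e2 hS0 (hdef m hm1 (by omega)) (hdef (m + 1) (by omega) hm1n)
    master0
end
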